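/- For every nonnegative integer n, C_{n+1}^2 = \sum_{k=0}^{n} (2k+1)(2k+3)(8nk+2n+10k+4) / ((2n+1)(2n+2)(2n+3)(2n+4)(2n+5)) * binom(2n+2, n-k) * binom(2n+5, n-k+2). -/

import Mathlib

noncomputable def Gq (n k : ℕ) : ℚ :=
  (8*(k:ℚ)^4+(16*(n:ℚ)+44)*(k:ℚ)^3+(8*(n:ℚ)^2+52*(n:ℚ)+70)*(k:ℚ)^2
      +(12*(n:ℚ)^2+44*(n:ℚ)+34)*(k:ℚ)+4*(n:ℚ)^3+22*(n:ℚ)^2+34*(n:ℚ)+12)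
    * ((2*n+2).choose (n-k)) * ((2*n+5).choose (n-k+2))
    / ((2*(n:ℚ)+1)*(2*(n:ℚ)+2)*(2*(n:ℚ)+3)*(2*(n:ℚ)+4)*(2*(n:ℚ)+5))

lemma gq_step (n k : ℕ) (hk : k < n) :
    ((2 * k + 1 : ℚ) * (2 * k + 3) * (8 * n * k + 2 * n + 10 * k + 4)) /
        ((2 * n + 1 : ℚ) * (2 * n + 2) * (2 * n + 3) * (2 * n + 4) * (2 * n + 5)) *
      ((2 * n + 2).choose (n - k)) * ((2 * n + 5).choose (n - k + 2))
    = Gq n k - Gq n (k + 1) := by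
  obtain ⟨m, rfl⟩ : ∃ m, n = k + m + 1 := ⟨n - k - 1, by omega⟩
  have hD : ((2 * ((k + m + 1 : ℕ) : ℚ) + 1) * (2 * ((k + m + 1 : ℕ) : ℚ) + 2) *
      (2 * ((k + m + 1 : ℕ) : ℚ) + 3) * (2 * ((k + m + 1 : ℕ) : ℚ) + 4) *
      (2 * ((k + m + 1 : ℕ) : ℚ) + 5)) ≠ 0 := by push_cast; positivity
  have e1 : k + m + 1 - k = m + 1 := by omega
  have e2 : k + m + 1 - (k + 1) = m := by omega
  unfold Gq
  simp only [e1, e2, show m + 1 + 2 = m + 3 from rfl]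
  have h1 : (((2*(k+m+1)+2).choose (m+1) : ℚ)) * (m+1)
      = (((2*(k+m+1)+2).choose m : ℚ)) * (2*k+m+4) := by
    have h := Nat.choose_succ_right_eq (2*(k+m+1)+2) m
    have hs : 2*(k+m+1)+2 - m = 2*k+m+4 := by omega
    rw [hs] at h
    exact_mod_cast h
  have h2 : (((2*(k+m+1)+5).choose (m+3) : ℚ)) * (m+3)
      = (((2*(k+m+1)+5).choose (m+2) : ℚ)) * (2*k+m+5) := by
    have h := Nat.choose_succ_right_eq (2*(k+m+1)+5) (m+2)
    have hs : 2*(k+m+1)+5 - (m+2) = 2*k+m+5 := by omega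
    rw [hs] at h
    exact_mod_cast h
  have h12 : ((((2*(k+m+1)+2).choose (m+1) : ℚ)) * (m+1)) *
        ((((2*(k+m+1)+5).choose (m+3) : ℚ)) * (m+3))
      = ((((2*(k+m+1)+2).choose m : ℚ)) * (2*k+m+4)) *
        ((((2*(k+m+1)+5).choose (m+2) : ℚ)) * (2*k+m+5)) := by
    rw [h1, h2]
  have hW : (((m:ℚ)+1)*((m:ℚ)+3)) ≠ 0 := by positivity
  rw [div_mul_eq_mul_div, div_mul_eq_mul_div, div_sub_div_same, div_eq_div_iff hD hD]
  apply mul_left_cancel₀ hW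
  push_cast
  push_cast at h12
  linear_combination (((8*(k:ℚ)^4+(16*((k:ℚ)+(m:ℚ)+1)+44)*(k:ℚ)^3
      +(8*((k:ℚ)+(m:ℚ)+1)^2+52*((k:ℚ)+(m:ℚ)+1)+70)*(k:ℚ)^2
      +(12*((k:ℚ)+(m:ℚ)+1)^2+44*((k:ℚ)+(m:ℚ)+1)+34)*(k:ℚ)
      +4*((k:ℚ)+(m:ℚ)+1)^3+22*((k:ℚ)+(m:ℚ)+1)^2+34*((k:ℚ)+(m:ℚ)+1)+12)
      - ((2*(k:ℚ)+1)*(2*(k:ℚ)+3)*(8*((k:ℚ)+(m:ℚ)+1)*(k:ℚ)+2*((k:ℚ)+(m:ℚ)+1)+10*(k:ℚ)+4)))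
      * (-((2*((k:ℚ)+(m:ℚ)+1)+1)*(2*((k:ℚ)+(m:ℚ)+1)+2)*(2*((k:ℚ)+(m:ℚ)+1)+3)
        *(2*((k:ℚ)+(m:ℚ)+1)+4)*(2*((k:ℚ)+(m:ℚ)+1)+5)))) * h12

lemma gq_last (n : ℕ) :
    ((2 * n + 1 : ℚ) * (2 * n + 3) * (8 * n * n + 2 * n + 10 * n + 4)) /
        ((2 * n + 1 : ℚ) * (2 * n + 2) * (2 * n + 3) * (2 * n + 4) * (2 * n + 5)) *
      ((2 * n + 2).choose (n - n)) * ((2 * n + 5).choose (n - n + 2))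
    = Gq n n := by
  unfold Gq
  rw [Nat.sub_self]
  push_cast
  ring

lemma gq_base (n : ℕ) : (catalan (n + 1) : ℚ) ^ 2 = Gq n 0 := by
  have hD : ((2*(n:ℚ)+1)*(2*(n:ℚ)+2)*(2*(n:ℚ)+3)*(2*(n:ℚ)+4)*(2*(n:ℚ)+5)) ≠ 0 := by
    positivity
  have hc : ((n:ℚ)+2) * (catalan (n+1) : ℚ) = (((2*n+2).choose (n+1) : ℕ) : ℚ) := by
    have h := succ_mul_catalan_eq_centralBinom (n+1)
    have : (n+1).centralBinom = (2*n+2).choose (n+1) := by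
      unfold Nat.centralBinom; congr 1
    rw [this] at h
    exact_mod_cast h
  have qr1 : (((2*n+2).choose (n+1) : ℕ) : ℚ) * ((n:ℚ)+1)
      = (((2*n+2).choose n : ℕ) : ℚ) * ((n:ℚ)+2) := by
    have h := Nat.choose_succ_right_eq (2*n+2) n
    have hs : 2*n+2 - n = n+2 := by omega
    rw [hs] at h
    exact_mod_cast h
  have qa1 : (2*(n:ℚ)+3) * (((2*n+2).choose (n+1) : ℕ) : ℚ)
      = (((2*n+3).choose (n+1) : ℕ) : ℚ) * ((n:ℚ)+2) := by
    have h := Nat.add_one_mul_choose_eq (2*n+2) (n+1)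
    have e : 2*n+2+1 = 2*n+3 := by omega
    have e2 : n+1+1 = n+2 := rfl
    rw [e, e2] at h
    have hs : (2*n+3).choose (n+2) = (2*n+3).choose (n+1) := by
      rw [← Nat.choose_symm (show n+2 ≤ 2*n+3 by omega)]
      congr 1; omega
    rw [hs] at h
    exact_mod_cast h
  have qa2 : (2*(n:ℚ)+4) * (((2*n+3).choose (n+1) : ℕ) : ℚ)
      = (((2*n+4).choose (n+2) : ℕ) : ℚ) * ((n:ℚ)+2) := by
    have h := Nat.add_one_mul_choose_eq (2*n+3) (n+1)
    have e : 2*n+3+1 = 2*n+4 := by omega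
    rw [e, show n+1+1 = n+2 from rfl] at h
    exact_mod_cast h
  have qa3 : (2*(n:ℚ)+5) * (((2*n+4).choose (n+2) : ℕ) : ℚ)
      = (((2*n+5).choose (n+2) : ℕ) : ℚ) * ((n:ℚ)+3) := by
    have h := Nat.add_one_mul_choose_eq (2*n+4) (n+2)
    have e : 2*n+4+1 = 2*n+5 := by omega
    rw [e, show n+2+1 = n+3 from rfl] at h
    have hs : (2*n+5).choose (n+3) = (2*n+5).choose (n+2) := by
      rw [← Nat.choose_symm (show n+3 ≤ 2*n+5 by omega)]
      congr 1; omega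
    rw [hs] at h
    exact_mod_cast h
  have p2 : (2*(n:ℚ)+3)*(2*(n:ℚ)+4) * (((2*n+2).choose (n+1) : ℕ) : ℚ)
      = (((2*n+4).choose (n+2) : ℕ) : ℚ) * ((n:ℚ)+2)^2 := by
    linear_combination (2*(n:ℚ)+4) * qa1 + ((n:ℚ)+2) * qa2
  have p3 : (2*(n:ℚ)+3)*(2*(n:ℚ)+4)*(2*(n:ℚ)+5) * (((2*n+2).choose (n+1) : ℕ) : ℚ)
      = (((2*n+5).choose (n+2) : ℕ) : ℚ) * ((n:ℚ)+2)^2 * ((n:ℚ)+3) := by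
    linear_combination (2*(n:ℚ)+5) * p2 + ((n:ℚ)+2)^2 * qa3
  have hp : ((n:ℚ)+1)*(2*(n:ℚ)+3)*(2*(n:ℚ)+4)*(2*(n:ℚ)+5)
        * (((2*n+2).choose (n+1) : ℕ) : ℚ)^2
      = ((n:ℚ)+2)^3*((n:ℚ)+3) * (((2*n+2).choose n : ℕ) : ℚ)
        * (((2*n+5).choose (n+2) : ℕ) : ℚ) := by
    linear_combination ((2*(n:ℚ)+3)*(2*(n:ℚ)+4)*(2*(n:ℚ)+5)
        * (((2*n+2).choose (n+1) : ℕ) : ℚ)) * qr1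
      + (((n:ℚ)+2) * (((2*n+2).choose n : ℕ) : ℚ)) * p3
  unfold Gq
  rw [Nat.sub_zero, eq_div_iff hD]
  have hW : (((n:ℚ)+2)^2*((n:ℚ)+3)) ≠ 0 := by positivity
  apply mul_left_cancel₀ hW
  push_cast
  linear_combination ((((n:ℚ)+3)*((2*(n:ℚ)+1)*(2*(n:ℚ)+2)*(2*(n:ℚ)+3)*(2*(n:ℚ)+4)*(2*(n:ℚ)+5))
      * (((n:ℚ)+2)*(catalan (n+1) : ℚ) + (((2*n+2).choose (n+1) : ℕ) : ℚ)))) * hc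
    + (2*((n:ℚ)+3)*(2*(n:ℚ)+1)) * hp

theorem stmt_3 (n : ℕ) :
    (catalan (n + 1) : ℚ) ^ 2 =
      ∑ k ∈ Finset.range (n + 1),
        ((2 * k + 1 : ℚ) * (2 * k + 3) * (8 * n * k + 2 * n + 10 * k + 4)) /
            ((2 * n + 1 : ℚ) * (2 * n + 2) * (2 * n + 3) * (2 * n + 4) * (2 * n + 5)) *
          ((2 * n + 2).choose (n - k)) * ((2 * n + 5).choose (n - k + 2)) := by
  rw [Finset.sum_range_succ]
  have h1 : ∑ k ∈ Finset.range n,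
        ((2 * k + 1 : ℚ) * (2 * k + 3) * (8 * n * k + 2 * n + 10 * k + 4)) /
            ((2 * n + 1 : ℚ) * (2 * n + 2) * (2 * n + 3) * (2 * n + 4) * (2 * n + 5)) *
          ((2 * n + 2).choose (n - k)) * ((2 * n + 5).choose (n - k + 2))
      = Gq n 0 - Gq n n := by
    rw [← Finset.sum_range_sub' (Gq n) n]
    exact Finset.sum_congr rfl fun k hk => gq_step n k (Finset.mem_range.mp hk)
  rw [h1, gq_last n, gq_base n]
  ring
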